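/- Let n ≥ 1 and consider the real Lie algebra gl(n,ℝ) of all real n×n matrices with bracket the matrix commutator. For every ν with 1 ≤ ν ≤ n, the matrix unit e_{νν} = E(ν,ν) (the matrix with a 1 in position (ν,ν) and zeros elsewhere) is an essential element of gl(n,ℝ). -/

import Mathlib

open Matrix

attribute [local instance 100] LieRing.ofAssociativeRing

/-- The linear span of all brackets `⁅a, b⁆` with `a ∈ A`, `b ∈ B`. -/
def bracketSpan {L : Type*} [LieRing L] [LieAlgebra ℝ L] (A B : Submodule ℝ L) :
    Submodule ℝ L :=
  Submodule.span ℝ {x | ∃ a ∈ A, ∃ b ∈ B, x = ⁅a, b⁆}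

/-- `m` is essential: `ad m` is diagonalizable over `ℝ` and
`ℝ·m + [m,g] + [[m,g],[m,g]] = g`. -/
def Essential {L : Type*} [LieRing L] [LieAlgebra ℝ L] (m : L) : Prop :=
  (⨆ c : ℝ, (LieAlgebra.ad ℝ L m).eigenspace c) = ⊤ ∧
    Submodule.span ℝ {m} ⊔ LinearMap.range (LieAlgebra.ad ℝ L m) ⊔
      bracketSpan (LinearMap.range (LieAlgebra.ad ℝ L m))
        (LinearMap.range (LieAlgebra.ad ℝ L m)) = ⊤

/-- In `gl(n,ℝ)` (all real `n × n` matrices with the commutator bracket), each matrix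
unit `e_{νν} = E(ν,ν)` is essential. -/
theorem gl_stdBasisMatrix_essential (n : ℕ) (hn : 1 ≤ n) (ν : Fin n) :
    Essential (single ν ν (1 : ℝ)) := by
  set m : Matrix (Fin n) (Fin n) ℝ := single ν ν (1 : ℝ) with hm
  have key : ∀ i j : Fin n, ⁅m, single i j (1:ℝ)⁆ =
      ((if i = ν then (1:ℝ) else 0) - (if j = ν then 1 else 0)) • single i j 1 := by
    intro i j
    rw [hm, Ring.lie_def]
    by_cases hi : i = ν <;> by_cases hj : j = ν <;>
      simp [hi, hj, single_mul_single_same, single_mul_single_of_ne, Ne.symm]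
  have hsmul : ∀ (i j : Fin n) (c : ℝ),
      single i j c = c • single i j (1:ℝ) := by
    intro i j c
    rw [smul_single, smul_eq_mul, mul_one]
  have decomp : ∀ (S : Submodule ℝ (Matrix (Fin n) (Fin n) ℝ)),
      (∀ i j : Fin n, single i j (1:ℝ) ∈ S) → S = ⊤ := by
    intro S hS
    rw [eq_top_iff]
    intro x _
    rw [matrix_eq_sum_single x]
    refine Submodule.sum_mem S fun i _ => Submodule.sum_mem S fun j _ => ?_
    rw [hsmul]
    exact Submodule.smul_mem S _ (hS i j)
  have hrange : ∀ i j : Fin n, (i = ν ∧ j ≠ ν) ∨ (i ≠ ν ∧ j = ν) →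
      single i j (1:ℝ) ∈ LinearMap.range (LieAlgebra.ad ℝ _ m) := by
    rintro i j (⟨hi, hj⟩ | ⟨hi, hj⟩)
    · refine ⟨single i j (1:ℝ), ?_⟩
      rw [LieAlgebra.ad_apply, key, hi]
      simp [hj]
    · refine ⟨-single i j (1:ℝ), ?_⟩
      rw [LieAlgebra.ad_apply, lie_neg, key]
      simp [hi, hj]
  constructor
  · refine decomp _ fun i j => ?_
    refine Submodule.mem_iSup_of_mem
      ((if i = ν then (1:ℝ) else 0) - (if j = ν then 1 else 0)) ?_
    rw [Module.End.mem_eigenspace_iff, LieAlgebra.ad_apply]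
    exact key i j
  · refine decomp _ fun i j => ?_
    by_cases hi : i = ν <;> by_cases hj : j = ν
    · subst hi; subst hj
      exact Submodule.mem_sup_left (Submodule.mem_sup_left (Submodule.subset_span rfl))
    · exact Submodule.mem_sup_left (Submodule.mem_sup_right (hrange i j (Or.inl ⟨hi, hj⟩)))
    · exact Submodule.mem_sup_left (Submodule.mem_sup_right (hrange i j (Or.inr ⟨hi, hj⟩)))
    · -- i ≠ ν, j ≠ ν
      have hb : ⁅single ν j (1:ℝ), single i ν (1:ℝ)⁆ =
          (if j = i then m else 0) - single i j 1 := by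
        rw [Ring.lie_def]
        by_cases h : j = i <;>
          simp [hm, h, single_mul_single_same, single_mul_single_of_ne, Ne.symm]
      have heq : single i j (1:ℝ) =
          (if j = i then m else 0) -
            ⁅single ν j (1:ℝ), single i ν (1:ℝ)⁆ := by
        rw [hb]; ring_nf; abel
      rw [heq]
      refine Submodule.sub_mem _ ?_ ?_
      · by_cases h : j = i <;> simp [h]
        exact Submodule.mem_sup_left (Submodule.mem_sup_left (Submodule.subset_span rfl))
      · exact Submodule.mem_sup_right <| Submodule.subset_span
          ⟨_, hrange ν j (Or.inl ⟨rfl, hj⟩), _, hrange i ν (Or.inr ⟨hi, rfl⟩), rfl⟩
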